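/- arXiv:1705.06999 — 2 statements merged into one kernel-verified Lean document; each statement's English description precedes it below -/
import Mathlib

section
/- Let u, v : Ω → ℝ be smooth with v₁ vanishing nowhere on Ω. If u₂·v₁ − u₁·v₂ = v₁² and u₄·v₁ − u₁·v₄ = v₁·v₃ hold identically on Ω, then ∂₃(v₂/v₁) = ∂₁(v₄/v₁) on Ω. -/
/-- Partial derivative of `F : ℝ⁴ → ℝ` in the `i`-th coordinate direction. -/
noncomputable def pd (i : Fin 4) (F : (Fin 4 → ℝ) → ℝ) : (Fin 4 → ℝ) → ℝ :=
  fun x => fderiv ℝ F x (Pi.single i 1)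

open Topology Filter

private lemma pd_congr {f g : (Fin 4 → ℝ) → ℝ} {x : Fin 4 → ℝ} (h : f =ᶠ[nhds x] g) (i : Fin 4) :
    pd i f x = pd i g x := by
  unfold pd; rw [Filter.EventuallyEq.fderiv_eq h]

private lemma pd_mul {f g : (Fin 4 → ℝ) → ℝ} {x : Fin 4 → ℝ}
    (hf : DifferentiableAt ℝ f x) (hg : DifferentiableAt ℝ g x) (i : Fin 4) :
    pd i (fun y => f y * g y) x = pd i f x * g x + f x * pd i g x := by
  unfold pd
  rw [fderiv_fun_mul hf hg]
  simp only [ContinuousLinearMap.add_apply, ContinuousLinearMap.coe_smul', Pi.smul_apply,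
    smul_eq_mul]
  ring

private lemma pd_expand {f₁ g₁ f₂ g₂ : (Fin 4 → ℝ) → ℝ} {x : Fin 4 → ℝ}
    (h1 : DifferentiableAt ℝ f₁ x) (h2 : DifferentiableAt ℝ g₁ x)
    (h3 : DifferentiableAt ℝ f₂ x) (h4 : DifferentiableAt ℝ g₂ x) (i : Fin 4) :
    pd i (fun y => f₁ y * g₁ y - f₂ y * g₂ y) x
      = pd i f₁ x * g₁ x + f₁ x * pd i g₁ x - (pd i f₂ x * g₂ x + f₂ x * pd i g₂ x) := by
  have H : HasFDerivAt (fun y => f₁ y * g₁ y - f₂ y * g₂ y)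
      ((f₁ x • fderiv ℝ g₁ x + g₁ x • fderiv ℝ f₁ x)
        - (f₂ x • fderiv ℝ g₂ x + g₂ x • fderiv ℝ f₂ x)) x :=
    (h1.hasFDerivAt.mul h2.hasFDerivAt).sub (h3.hasFDerivAt.mul h4.hasFDerivAt)
  unfold pd
  rw [H.fderiv]
  simp only [ContinuousLinearMap.sub_apply, ContinuousLinearMap.add_apply,
    ContinuousLinearMap.coe_smul', Pi.smul_apply, smul_eq_mul]
  ring

private lemma contDiffAt_pd {f : (Fin 4 → ℝ) → ℝ} {x : Fin 4 → ℝ}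
    (hf : ContDiffAt ℝ (⊤ : ℕ∞) f x) (i : Fin 4) :
    ContDiffAt ℝ (⊤ : ℕ∞) (pd i f) x := by
  have h1 : ContDiffAt ℝ (⊤ : ℕ∞) (fderiv ℝ f) x :=
    hf.fderiv_right (by exact_mod_cast le_top)
  exact h1.clm_apply contDiffAt_const

private lemma diff_pd {f : (Fin 4 → ℝ) → ℝ} {x : Fin 4 → ℝ}
    (hf : ContDiffAt ℝ (⊤ : ℕ∞) f x) (i : Fin 4) :
    DifferentiableAt ℝ (pd i f) x :=
  (contDiffAt_pd hf i).differentiableAt (by simp)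

private lemma pd_comm {f : (Fin 4 → ℝ) → ℝ} {x : Fin 4 → ℝ}
    (hf : ContDiffAt ℝ (⊤ : ℕ∞) f x) (i j : Fin 4) :
    pd i (pd j f) x = pd j (pd i f) x := by
  have h2 : IsSymmSndFDerivAt ℝ f x := hf.isSymmSndFDerivAt (by
    rw [show ((2:WithTop ℕ∞)) = ((2:ℕ∞):WithTop ℕ∞) by norm_cast]
    rw [minSmoothness_of_isRCLikeNormedField]; exact_mod_cast le_top)
  have hd : DifferentiableAt ℝ (fderiv ℝ f) x :=
    (hf.fderiv_right (m := (⊤ : ℕ∞)) (by exact_mod_cast le_top)).differentiableAt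
      (by simp)
  have key : ∀ k l : Fin 4,
      pd k (pd l f) x = fderiv ℝ (fderiv ℝ f) x (Pi.single k 1) (Pi.single l 1) := by
    intro k l
    show fderiv ℝ (fun y => (fderiv ℝ f y) ((fun _ => (Pi.single l 1 : Fin 4 → ℝ)) y)) x
        (Pi.single k 1) = _
    rw [fderiv_clm_apply hd (differentiableAt_const _)]
    simp
  rw [key i j, key j i, h2]

private lemma pd_div {f g : (Fin 4 → ℝ) → ℝ} {x : Fin 4 → ℝ}
    (hf : ContDiffAt ℝ (⊤ : ℕ∞) f x) (hg : ContDiffAt ℝ (⊤ : ℕ∞) g x)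
    (hgx : g x ≠ 0) (i : Fin 4) :
    pd i (fun y => f y / g y) x = (pd i f x * g x - f x * pd i g x) / g x ^ 2 := by
  have hq : ContDiffAt ℝ (⊤ : ℕ∞) (fun y => f y / g y) x := hf.div hg hgx
  have hev : (fun y => f y / g y * g y) =ᶠ[nhds x] f := by
    filter_upwards [hg.continuousAt.eventually_ne hgx] with y hy
    field_simp
  have h := pd_congr hev i
  rw [pd_mul (hq.differentiableAt (by simp))
      (hg.differentiableAt (by simp)) i] at h
  rw [eq_div_iff (pow_ne_zero 2 hgx)]
  field_simp at h
  linear_combination h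

/-- Elimination of `u` from the Segre type [22] system `u₂v₁ − u₁v₂ = v₁²`,
`u₄v₁ − u₁v₄ = v₁v₃` yields `∂₃(v₂/v₁) = ∂₁(v₄/v₁)`.
Coordinates `x¹,…,x⁴` are indexed by `0,…,3`. -/
theorem statement4 (Ω : Set (Fin 4 → ℝ)) (hΩ : IsOpen Ω)
    (u v : (Fin 4 → ℝ) → ℝ)
    (hu : ContDiffOn ℝ (⊤ : ℕ∞) u Ω) (hv : ContDiffOn ℝ (⊤ : ℕ∞) v Ω)
    (hv1 : ∀ x ∈ Ω, pd 0 v x ≠ 0)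
    (heq1 : ∀ x ∈ Ω, pd 1 u x * pd 0 v x - pd 0 u x * pd 1 v x = (pd 0 v x) ^ 2)
    (heq2 : ∀ x ∈ Ω, pd 3 u x * pd 0 v x - pd 0 u x * pd 3 v x = pd 0 v x * pd 2 v x) :
    ∀ x ∈ Ω,
      pd 2 (fun y => pd 1 v y / pd 0 v y) x = pd 0 (fun y => pd 3 v y / pd 0 v y) x := by
  intro x hx
  have hmem : Ω ∈ nhds x := hΩ.mem_nhds hx
  have hvx : ContDiffAt ℝ (⊤ : ℕ∞) v x := hv.contDiffAt hmem
  have hux : ContDiffAt ℝ (⊤ : ℕ∞) u x := hu.contDiffAt hmem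
  have hw : pd 0 v x ≠ 0 := hv1 x hx
  have du0 : DifferentiableAt ℝ (pd 0 u) x := diff_pd hux 0
  have du1 : DifferentiableAt ℝ (pd 1 u) x := diff_pd hux 1
  have du3 : DifferentiableAt ℝ (pd 3 u) x := diff_pd hux 3
  have dv0 : DifferentiableAt ℝ (pd 0 v) x := diff_pd hvx 0
  have dv1 : DifferentiableAt ℝ (pd 1 v) x := diff_pd hvx 1
  have dv2 : DifferentiableAt ℝ (pd 2 v) x := diff_pd hvx 2
  have dv3 : DifferentiableAt ℝ (pd 3 v) x := diff_pd hvx 3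
  -- eventual identities
  have h1 : (fun y => pd 1 u y * pd 0 v y - pd 0 u y * pd 1 v y)
      =ᶠ[nhds x] (fun y => pd 0 v y * pd 0 v y) := by
    filter_upwards [hmem] with y hy
    simpa [pow_two] using heq1 y hy
  have h2 : (fun y => pd 3 u y * pd 0 v y - pd 0 u y * pd 3 v y)
      =ᶠ[nhds x] (fun y => pd 0 v y * pd 2 v y) := by
    filter_upwards [hmem] with y hy
    exact heq2 y hy
  have F1 : pd 3 (pd 1 u) x * pd 0 v x + pd 1 u x * pd 3 (pd 0 v) x
      - (pd 3 (pd 0 u) x * pd 1 v x + pd 0 u x * pd 3 (pd 1 v) x)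
      = pd 3 (pd 0 v) x * pd 0 v x + pd 0 v x * pd 3 (pd 0 v) x := by
    rw [← pd_expand du1 dv0 du0 dv1 3, ← pd_mul dv0 dv0 3]
    exact pd_congr h1 3
  have F2 : pd 1 (pd 3 u) x * pd 0 v x + pd 3 u x * pd 1 (pd 0 v) x
      - (pd 1 (pd 0 u) x * pd 3 v x + pd 0 u x * pd 1 (pd 3 v) x)
      = pd 1 (pd 0 v) x * pd 2 v x + pd 0 v x * pd 1 (pd 2 v) x := by
    rw [← pd_expand du3 dv0 du0 dv3 1, ← pd_mul dv0 dv2 1]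
    exact pd_congr h2 1
  have G1 : pd 0 (pd 1 u) x * pd 0 v x + pd 1 u x * pd 0 (pd 0 v) x
      - (pd 0 (pd 0 u) x * pd 1 v x + pd 0 u x * pd 0 (pd 1 v) x)
      = pd 0 (pd 0 v) x * pd 0 v x + pd 0 v x * pd 0 (pd 0 v) x := by
    rw [← pd_expand du1 dv0 du0 dv1 0, ← pd_mul dv0 dv0 0]
    exact pd_congr h1 0
  have G2 : pd 0 (pd 3 u) x * pd 0 v x + pd 3 u x * pd 0 (pd 0 v) x
      - (pd 0 (pd 0 u) x * pd 3 v x + pd 0 u x * pd 0 (pd 3 v) x)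
      = pd 0 (pd 0 v) x * pd 2 v x + pd 0 v x * pd 0 (pd 2 v) x := by
    rw [← pd_expand du3 dv0 du0 dv3 0, ← pd_mul dv0 dv2 0]
    exact pd_congr h2 0
  -- symmetry of second derivatives
  rw [pd_comm hux 3 1, pd_comm hux 3 0, pd_comm hvx 3 0, pd_comm hvx 3 1] at F1
  rw [pd_comm hvx 1 0, pd_comm hux 1 0, pd_comm hvx 1 2] at F2
  have E1 := heq1 x hx
  have E2 := heq2 x hx
  rw [pd_div (contDiffAt_pd hvx 1) (contDiffAt_pd hvx 0) hw 2,
    pd_div (contDiffAt_pd hvx 3) (contDiffAt_pd hvx 0) hw 0,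
    pd_comm hvx 2 0]
  rw [div_eq_div_iff (pow_ne_zero 2 hw) (pow_ne_zero 2 hw)]
  linear_combination (pd 0 v x ^ 2) * F1 - (pd 0 v x ^ 2) * F2
    + (pd 0 v x * pd 1 v x) * G2 - (pd 0 v x * pd 3 v x) * G1
    + (pd 3 v x * pd 0 (pd 0 v) x - pd 0 v x * pd 0 (pd 3 v) x) * E1
    + (pd 0 v x * pd 0 (pd 1 v) x - pd 1 v x * pd 0 (pd 0 v) x) * E2
end

section
/- Let v : Ω → ℝ be smooth. Then v satisfies v₂₄ − v₃₃ = v₃·v₁₄ − v₄·v₁₃ identically on Ω if and only if for every λ ∈ ℝ the vector fields X = ∂₂ − (λ·v₄ + v₃)·∂₁ − λ²·∂₄ and Y = ∂₃ − v₄·∂₁ − λ·∂₄ on Ω commute: [X, Y] = 0. -/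
/-- Lie bracket of two vector fields on ℝ⁴, given by their component functions:
`[X, Y]ⁱ = Σⱼ (Xʲ ∂ⱼYⁱ − Yʲ ∂ⱼXⁱ)`. -/
noncomputable def lieB (X Y : (Fin 4 → ℝ) → (Fin 4 → ℝ)) : (Fin 4 → ℝ) → (Fin 4 → ℝ) :=
  fun x i => ∑ j : Fin 4, (X x j * pd j (fun y => Y y i) x - Y x j * pd j (fun y => X y i) x)

section aux

lemma pd_const (c : ℝ) (j : Fin 4) (x : Fin 4 → ℝ) : pd j (fun _ => c) x = 0 := by
  simp [pd]

variable {v : (Fin 4 → ℝ) → ℝ} {x : Fin 4 → ℝ}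

lemma pd_pd_eq (hd2 : DifferentiableAt ℝ (fderiv ℝ v) x) (i j : Fin 4) :
    pd i (pd j v) x = fderiv ℝ (fderiv ℝ v) x (Pi.single i 1) (Pi.single j 1) := by
  have h : fderiv ℝ (fun y => fderiv ℝ v y (Pi.single j (1:ℝ))) x
      = (fderiv ℝ (fderiv ℝ v) x).flip (Pi.single j 1) := by
    rw [fderiv_clm_apply hd2 (differentiableAt_const _)]
    simp
  show fderiv ℝ (fun y => fderiv ℝ v y (Pi.single j (1:ℝ))) x (Pi.single i 1) = _
  rw [h]
  rfl

lemma pd_symm (hd2 : DifferentiableAt ℝ (fderiv ℝ v) x)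
    (hs : IsSymmSndFDerivAt ℝ v x) (i j : Fin 4) :
    pd i (pd j v) x = pd j (pd i v) x := by
  rw [pd_pd_eq hd2, pd_pd_eq hd2, hs]

lemma pd_diff (hd2 : DifferentiableAt ℝ (fderiv ℝ v) x) (j : Fin 4) :
    DifferentiableAt ℝ (pd j v) x :=
  hd2.clm_apply (differentiableAt_const _)

lemma pd_comb (hd2 : DifferentiableAt ℝ (fderiv ℝ v) x) (lam : ℝ) (i : Fin 4) :
    pd i (fun y => -(lam * pd 3 v y + pd 2 v y)) x
      = -(lam * pd i (pd 3 v) x + pd i (pd 2 v) x) := by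
  have h3 := (pd_diff hd2 3).hasFDerivAt
  have h2 := (pd_diff hd2 2).hasFDerivAt
  have H := ((h3.const_mul lam).add h2).neg
  have hf := H.fderiv
  show fderiv ℝ (fun y => -(lam * pd 3 v y + pd 2 v y)) x (Pi.single i 1) = _
  rw [show (fun y => -(lam * pd 3 v y + pd 2 v y)) = -((fun y => lam * pd 3 v y) + pd 2 v) from rfl, hf]
  simp [pd]

lemma pd_neg3 (hd2 : DifferentiableAt ℝ (fderiv ℝ v) x) (i : Fin 4) :
    pd i (fun y => -(pd 3 v y)) x = -(pd i (pd 3 v) x) := by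
  have H := (pd_diff hd2 3).hasFDerivAt.neg
  have hf := H.fderiv
  show fderiv ℝ (fun y => -(pd 3 v y)) x (Pi.single i 1) = _
  rw [show (fun y => -(pd 3 v y)) = -pd 3 v from rfl, hf]
  rfl

end aux

/-- `v` satisfies `v₂₄ − v₃₃ = v₃v₁₄ − v₄v₁₃` on `Ω` iff for every `λ` the vector fields
`X = ∂₂ − (λv₄ + v₃)∂₁ − λ²∂₄` and `Y = ∂₃ − v₄∂₁ − λ∂₄` commute on `Ω`
(dispersionless Lax pair of the Segre type [3] system).
Coordinates `x¹,…,x⁴` are indexed by `0,…,3`. -/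
theorem statement12 (Ω : Set (Fin 4 → ℝ)) (hΩ : IsOpen Ω)
    (v : (Fin 4 → ℝ) → ℝ) (hv : ContDiffOn ℝ (⊤ : ℕ∞) v Ω) :
    (∀ x ∈ Ω,
        pd 3 (pd 1 v) x - pd 2 (pd 2 v) x
          = pd 2 v x * pd 3 (pd 0 v) x - pd 3 v x * pd 2 (pd 0 v) x) ↔
    (∀ lam : ℝ, ∀ x ∈ Ω,
        lieB (fun y => ![-(lam * pd 3 v y + pd 2 v y), 1, 0, -lam ^ 2])
             (fun y => ![-(pd 3 v y), 0, 1, -lam]) x = 0) := by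
  have hfacts : ∀ x ∈ Ω, DifferentiableAt ℝ (fderiv ℝ v) x ∧ IsSymmSndFDerivAt ℝ v x := by
    intro x hx
    have hvx : ContDiffAt ℝ (⊤ : ℕ∞) v x := hv.contDiffAt (hΩ.mem_nhds hx)
    constructor
    · have : ContDiffAt ℝ 1 (fderiv ℝ v) x :=
        hvx.fderiv_right (WithTop.coe_le_coe.mpr le_top)
      exact this.differentiableAt one_ne_zero
    · exact hvx.isSymmSndFDerivAt
        (le_trans (by norm_num) (WithTop.coe_le_coe.mpr (le_top (a := (2:ℕ∞)))))
  have key : ∀ lam : ℝ, ∀ x ∈ Ω,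
      lieB (fun y => ![-(lam * pd 3 v y + pd 2 v y), 1, 0, -lam ^ 2])
           (fun y => ![-(pd 3 v y), 0, 1, -lam]) x
        = ![(pd 2 v x * pd 3 (pd 0 v) x - pd 3 v x * pd 2 (pd 0 v) x)
              - (pd 3 (pd 1 v) x - pd 2 (pd 2 v) x), 0, 0, 0] := by
    intro lam x hx
    obtain ⟨hd2, hs⟩ := hfacts x hx
    funext i
    fin_cases i
    · show (∑ j : Fin 4, _) = _
      rw [Fin.sum_univ_four]
      simp only [Fin.zero_eta, Fin.mk_one, Fin.reduceFinMk, Matrix.cons_val_zero,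
        Matrix.cons_val_one, Matrix.head_cons, Matrix.cons_val_two, Matrix.tail_cons,
        Matrix.cons_val_three]
      rw [pd_comb hd2, pd_comb hd2, pd_comb hd2, pd_comb hd2,
        pd_neg3 hd2, pd_neg3 hd2, pd_neg3 hd2, pd_neg3 hd2]
      rw [pd_symm hd2 hs 1 3, pd_symm hd2 hs 0 3, pd_symm hd2 hs 0 2, pd_symm hd2 hs 3 2]
      ring
    · show (∑ j : Fin 4, _) = _
      rw [Fin.sum_univ_four]
      simp only [Fin.zero_eta, Fin.mk_one, Fin.reduceFinMk, Matrix.cons_val_zero,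
        Matrix.cons_val_one, Matrix.head_cons, Matrix.cons_val_two, Matrix.tail_cons,
        Matrix.cons_val_three, pd_const]
      ring
    · show (∑ j : Fin 4, _) = _
      rw [Fin.sum_univ_four]
      simp only [Fin.zero_eta, Fin.mk_one, Fin.reduceFinMk, Matrix.cons_val_zero,
        Matrix.cons_val_one, Matrix.head_cons, Matrix.cons_val_two, Matrix.tail_cons,
        Matrix.cons_val_three, pd_const]
      ring
    · show (∑ j : Fin 4, _) = _
      rw [Fin.sum_univ_four]
      simp only [Fin.zero_eta, Fin.mk_one, Fin.reduceFinMk, Matrix.cons_val_zero,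
        Matrix.cons_val_one, Matrix.head_cons, Matrix.cons_val_two, Matrix.tail_cons,
        Matrix.cons_val_three, pd_const]
      ring
  constructor
  · intro hpde lam x hx
    rw [key lam x hx]
    funext i
    fin_cases i <;> simp [hpde x hx]
  · intro hcomm x hx
    have h := congrFun ((key 0 x hx).symm.trans (hcomm 0 x hx)) 0
    simp only [Matrix.cons_val_zero, Pi.zero_apply] at h
    linarith
end
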